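/- If K ⊆ ℝ² is compact and A ⊆ ℝ² is open, then the intersection A ∩ K is strongly good: for every surjective isometry f : ℝ² → ℝ² with f(A ∩ K) ⊆ A ∩ K, one has f(A ∩ K) = A ∩ K. -/
import Mathlib


open Set Function

/-- An isometry mapping a compact set into itself maps it onto itself. -/
lemma isometry_image_eq_of_compact {X : Type*} [MetricSpace X] {f : X → X}
    (hf : Isometry f) {K : Set X} (hK : IsCompact K) (h : f '' K ⊆ K) : f '' K = K := by
  refine Subset.antisymm h fun x hx => ?_
  have hiter : ∀ n, f^[n] x ∈ K := by
    intro n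
    induction n with
    | zero => exact hx
    | succ n ih => rw [Function.iterate_succ_apply']; exact h ⟨_, ih, rfl⟩
  have hclosed : IsClosed (f '' K) := (hK.image hf.continuous).isClosed
  rw [← hclosed.closure_eq]
  rw [Metric.mem_closure_iff]
  intro ε hε
  obtain ⟨z, _, φ, hφ, hlim⟩ := hK.tendsto_subseq hiter
  have hcauchy := hlim.cauchySeq
  rw [Metric.cauchySeq_iff] at hcauchy
  obtain ⟨N, hN⟩ := hcauchy ε hε
  have hlt : φ N < φ (N + 1) := hφ (Nat.lt_succ_self N)
  refine ⟨f^[φ (N+1) - φ N] x, ?_, ?_⟩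
  · have h1 : 1 ≤ φ (N+1) - φ N := Nat.le_sub_of_add_le (by omega)
    have : f^[φ (N+1) - φ N] x = f (f^[φ (N+1) - φ N - 1] x) := by
      conv_lhs => rw [show φ (N+1) - φ N = (φ (N+1) - φ N - 1) + 1 by omega]
      rw [Function.iterate_succ_apply']
    rw [this]
    exact ⟨_, hiter _, rfl⟩
  · have hd := hN (N+1) (Nat.le_succ N) N le_rfl
    simp only [Function.comp_apply] at hd
    have hiso : ∀ n : ℕ, Isometry (f^[n]) := by
      intro n
      induction n with
      | zero => exact isometry_id
      | succ n ih => rw [Function.iterate_succ]; exact ih.comp hf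
    have heq : dist (f^[φ (N+1)] x) (f^[φ N] x) = dist (f^[φ (N+1) - φ N] x) x := by
      have h2 : f^[φ (N+1)] x = f^[φ N] (f^[φ (N+1) - φ N] x) := by
        rw [← Function.iterate_add_apply]
        congr 1; omega
      rw [h2, (hiso (φ N)).dist_eq]
    rw [heq] at hd
    rwa [dist_comm]

abbrev Plane := EuclideanSpace ℝ (Fin 2)

/-- Geometric equality: some surjective isometry of the plane maps `S₁` onto `S₂`. -/
def GeomEq (S₁ S₂ : Set Plane) : Prop :=
  ∃ f : Plane → Plane, Isometry f ∧ Function.Surjective f ∧ f '' S₁ = S₂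

/-- `S₁` is equal to or smaller than `S₂`: some surjective isometry maps `S₁` into `S₂`. -/
def GeomLe (S₁ S₂ : Set Plane) : Prop :=
  ∃ f : Plane → Plane, Isometry f ∧ Function.Surjective f ∧ f '' S₁ ⊆ S₂

/-- A figure is good if `A ≤ B` and `B ≤ A` imply `A ≈ B` for every figure `B`. -/
def IsGood (A : Set Plane) : Prop :=
  ∀ B : Set Plane, GeomLe A B → GeomLe B A → GeomEq A B

/-- A figure is strongly good if every surjective isometry mapping it into itself maps it onto itself. -/
def IsStronglyGood (A : Set Plane) : Prop :=
  ∀ f : Plane → Plane, Isometry f → Function.Surjective f → f '' A ⊆ A → f '' A = A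

/-- Proposition 1.10 (with the remark that boundedness of `A` is not needed):
the intersection of a compact set with an open set is strongly good. -/
theorem isStronglyGood_inter (K A : Set Plane) (hK : IsCompact K)
    (hAo : IsOpen A) : IsStronglyGood (A ∩ K) := by
  intro f hf hsurj hsub
  set S : Set Plane := A ∩ K with hS
  set X : Set Plane := closure S with hXdef
  have hXK : X ⊆ K := closure_minimal inter_subset_right hK.isClosed
  have hXcomp : IsCompact X := hK.of_isClosed_subset isClosed_closure hXK
  have hSX : S ⊆ X := subset_closure
  have hSAX : S = A ∩ X :=
    Subset.antisymm (subset_inter inter_subset_left hSX)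
      (fun x ⟨hxA, hxX⟩ => ⟨hxA, hXK hxX⟩)
  have hfX : f '' X ⊆ X := by
    calc f '' closure S ⊆ closure (f '' S) := image_closure_subset_closure_image hf.continuous
    _ ⊆ closure S := closure_mono hsub
  have hfXeq : f '' X = X := isometry_image_eq_of_compact hf hXcomp hfX
  have hinj : Function.Injective f := hf.injective
  -- the inverse isometry
  obtain ⟨g, hgf, hfg⟩ : ∃ g : Plane → Plane, (∀ x, g (f x) = x) ∧ (∀ x, f (g x) = x) := by
    have hbij : Function.Bijective f := ⟨hinj, hsurj⟩
    exact ⟨Function.invFun f, fun x => Function.leftInverse_invFun hinj x,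
      fun x => Function.rightInverse_invFun hsurj x⟩
  have hg : Isometry g := by
    intro a b
    rw [← hf (g a) (g b), hfg, hfg]
  set B : Set Plane := X \ A with hBdef
  have hBcomp : IsCompact B :=
    hXcomp.of_isClosed_subset (isClosed_closure.sdiff hAo) diff_subset
  have hgB : g '' B ⊆ B := by
    rintro _ ⟨b, hb, rfl⟩
    have hbX : b ∈ X := hb.1
    obtain ⟨y, hyX, hyb⟩ : b ∈ f '' X := hfXeq.symm ▸ hbX
    have hgb : g b = y := by rw [← hyb, hgf]
    rw [hgb]
    refine ⟨hyX, fun hyA => ?_⟩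
    have : f y ∈ S := hsub ⟨y, hSAX ▸ ⟨hyA, hyX⟩, rfl⟩
    rw [hyb] at this
    exact hb.2 this.1
  have hgBeq : g '' B = B := isometry_image_eq_of_compact hg hBcomp hgB
  have hfBeq : f '' B = B := by
    conv_lhs => rw [← hgBeq]
    rw [image_image]
    simp only [hfg, image_id']
  -- conclude
  have hdiff : f '' (X \ B) = X \ B := by
    rw [image_diff hinj, hfXeq, hfBeq]
  have hXB : X \ B = S := by
    rw [hBdef, diff_diff_right, diff_self, empty_union, inter_comm, ← hSAX]
  rw [hXB] at hdiff
  exact hdiff
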